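/- Let G be a graph and let P be an independent set partition of G containing a part {u₁,u₂,u₃} of size 3 and a part {v} of size 1 with u₁v not an edge of G. Then there exist three pairwise-adjacent neighbours Q₁, Q₂, Q₃ of P in B(G) that have a common neighbour R outside the closed neighbourhood N[P], together with a further neighbour Q' of P that is adjacent to exactly one of Q₁, Q₂, Q₃. -/

import Mathlib

open Finset

variable {V : Type*} [Fintype V] [DecidableEq V]

def IsISP (G : SimpleGraph V) (P : Finpartition (univ : Finset V)) : Prop :=
  ∀ A ∈ P.parts, ∀ u ∈ A, ∀ v ∈ A, ¬ G.Adj u v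

def samePart (P : Finpartition (univ : Finset V)) (u v : V) : Prop :=
  ∃ A ∈ P.parts, u ∈ A ∧ v ∈ A

def MovedBy (P Q : Finpartition (univ : Finset V)) (x : V) : Prop :=
  P ≠ Q ∧ ∀ u v : V, u ≠ x → v ≠ x → (samePart P u v ↔ samePart Q u v)

def BellGraph (G : SimpleGraph V) :
    SimpleGraph {P : Finpartition (univ : Finset V) // IsISP G P} where
  Adj P Q := ∃ x, MovedBy P.1 Q.1 x
  symm := by
    constructor
    rintro P Q ⟨x, hne, h⟩
    exact ⟨x, Ne.symm hne, fun u v hu hv => (h u v hu hv).symm⟩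
  loopless := by
    constructor
    rintro P ⟨x, hne, _⟩
    exact hne rfl

def UpperBell (G : SimpleGraph V) (k : ℕ) :
    SimpleGraph {P : Finpartition (univ : Finset V) // IsISP G P ∧ k ≤ P.parts.card} where
  Adj P Q := ∃ x, MovedBy P.1 Q.1 x
  symm := by
    constructor
    rintro P Q ⟨x, hne, h⟩
    exact ⟨x, Ne.symm hne, fun u v hu hv => (h u v hu hv).symm⟩
  loopless := by
    constructor
    rintro P ⟨x, hne, _⟩
    exact hne rfl

def IsUniversal (G : SimpleGraph V) (v : V) : Prop :=
  ∀ w, w ≠ v → G.Adj v w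

section Helpers

lemma samePart_refl (P : Finpartition (univ : Finset V)) (a : V) : samePart P a a := by
  obtain ⟨t, ht, hat⟩ := P.exists_mem (mem_univ a)
  exact ⟨t, ht, hat, hat⟩

lemma samePart_symm {P : Finpartition (univ : Finset V)} {a b : V}
    (h : samePart P a b) : samePart P b a := by
  obtain ⟨t, ht, ha, hb⟩ := h
  exact ⟨t, ht, hb, ha⟩

lemma samePart_trans {P : Finpartition (univ : Finset V)} {a b c : V}
    (h : samePart P a b) (h' : samePart P b c) : samePart P a c := by
  obtain ⟨t, ht, ha, hb⟩ := h
  obtain ⟨t', ht', hb', hc⟩ := h'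
  exact ⟨t, ht, ha, (P.eq_of_mem_parts ht' ht hb' hb) ▸ hc⟩

lemma samePart_ofSetoid (s : Setoid V) [DecidableRel s.r] (a b : V) :
    samePart (Finpartition.ofSetoid s) a b ↔ s.r a b := by
  constructor
  · rintro ⟨A, hA, ha, hb⟩
    have hApart : A = (Finpartition.ofSetoid s).part a :=
      (Finpartition.ofSetoid s).eq_of_mem_parts hA
        ((Finpartition.ofSetoid s).part_mem.2 (mem_univ a)) ha
        ((Finpartition.ofSetoid s).mem_part (mem_univ a))
    exact Finpartition.mem_part_ofSetoid_iff_rel.1 (hApart ▸ hb)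
  · intro h
    exact ⟨(Finpartition.ofSetoid s).part a,
      (Finpartition.ofSetoid s).part_mem.2 (mem_univ a),
      (Finpartition.ofSetoid s).mem_part (mem_univ a),
      Finpartition.mem_part_ofSetoid_iff_rel.2 h⟩

lemma ne_of_samePart {P Q : Finpartition (univ : Finset V)} {a b : V}
    (h : samePart P a b) (h' : ¬ samePart Q a b) : P ≠ Q := fun e => h' (e ▸ h)

open scoped Classical in
/-- Refine `P` by splitting off every element of `s` from its part. -/
noncomputable def splitP (P : Finpartition (univ : Finset V)) (s : Finset V) :
    Finpartition (univ : Finset V) :=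
  Finpartition.ofSetoid
    ⟨fun a b => samePart P a b ∧ ∀ x ∈ s, (a = x ↔ b = x),
     ⟨fun a => ⟨samePart_refl P a, fun _ _ => Iff.rfl⟩,
      fun h => ⟨samePart_symm h.1, fun x hx => (h.2 x hx).symm⟩,
      fun h h' => ⟨samePart_trans h.1 h'.1, fun x hx => (h.2 x hx).trans (h'.2 x hx)⟩⟩⟩

open scoped Classical in
lemma samePart_splitP (P : Finpartition (univ : Finset V)) (s : Finset V) (a b : V) :
    samePart (splitP P s) a b ↔ samePart P a b ∧ ∀ x ∈ s, (a = x ↔ b = x) :=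
  samePart_ofSetoid _ a b

open scoped Classical in
/-- Pull back `P` along `g`. -/
noncomputable def pullP (P : Finpartition (univ : Finset V)) (g : V → V) :
    Finpartition (univ : Finset V) :=
  Finpartition.ofSetoid
    ⟨fun a b => samePart P (g a) (g b),
     ⟨fun a => samePart_refl P (g a),
      fun h => samePart_symm h,
      fun h h' => samePart_trans h h'⟩⟩

open scoped Classical in
lemma samePart_pullP (P : Finpartition (univ : Finset V)) (g : V → V) (a b : V) :
    samePart (pullP P g) a b ↔ samePart P (g a) (g b) :=
  samePart_ofSetoid _ a b

lemma isISP_of_rel {G : SimpleGraph V} {P : Finpartition (univ : Finset V)}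
    (h : ∀ a b, samePart P a b → ¬ G.Adj a b) : IsISP G P :=
  fun A hA a ha b hb => h a b ⟨A, hA, ha, hb⟩

lemma rel_of_isISP {G : SimpleGraph V} {P : Finpartition (univ : Finset V)}
    (h : IsISP G P) {a b : V} (hab : samePart P a b) : ¬ G.Adj a b := by
  obtain ⟨A, hA, ha, hb⟩ := hab
  exact h A hA a ha b hb

end Helpers

theorem stmt11 (G : SimpleGraph V)
    (P : {P : Finpartition (univ : Finset V) // IsISP G P})
    (u₁ u₂ u₃ v : V) (h12 : u₁ ≠ u₂) (h13 : u₁ ≠ u₃) (h23 : u₂ ≠ u₃)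
    (h1 : ({u₁, u₂, u₃} : Finset V) ∈ P.1.parts) (h2 : ({v} : Finset V) ∈ P.1.parts)
    (e1 : ¬ G.Adj u₁ v) :
    ∃ Q₁ Q₂ Q₃, (BellGraph G).Adj P Q₁ ∧ (BellGraph G).Adj P Q₂ ∧ (BellGraph G).Adj P Q₃ ∧
      (BellGraph G).Adj Q₁ Q₂ ∧ (BellGraph G).Adj Q₁ Q₃ ∧ (BellGraph G).Adj Q₂ Q₃ ∧
      (∃ R, (BellGraph G).Adj Q₁ R ∧ (BellGraph G).Adj Q₂ R ∧ (BellGraph G).Adj Q₃ R ∧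
        R ≠ P ∧ ¬ (BellGraph G).Adj P R) ∧
      ∃ Q', (BellGraph G).Adj P Q' ∧
        (((BellGraph G).Adj Q' Q₁ ∧ ¬ (BellGraph G).Adj Q' Q₂ ∧ ¬ (BellGraph G).Adj Q' Q₃) ∨
         (¬ (BellGraph G).Adj Q' Q₁ ∧ (BellGraph G).Adj Q' Q₂ ∧ ¬ (BellGraph G).Adj Q' Q₃) ∨
         (¬ (BellGraph G).Adj Q' Q₁ ∧ ¬ (BellGraph G).Adj Q' Q₂ ∧ (BellGraph G).Adj Q' Q₃)) := by
  classical
  -- basic facts about P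
  have r12 : samePart P.1 u₁ u₂ := ⟨{u₁, u₂, u₃}, h1, by simp, by simp⟩
  have r13 : samePart P.1 u₁ u₃ := ⟨{u₁, u₂, u₃}, h1, by simp, by simp⟩
  have r23 : samePart P.1 u₂ u₃ := ⟨{u₁, u₂, u₃}, h1, by simp, by simp⟩
  have hclos3 : ∀ a b, samePart P.1 a b → (a = u₁ ∨ a = u₂ ∨ a = u₃) →
      (b = u₁ ∨ b = u₂ ∨ b = u₃) := by
    rintro a b ⟨B, hB, haB, hbB⟩ ha
    have haA : a ∈ ({u₁, u₂, u₃} : Finset V) := by simpa using ha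
    have hBA : B = ({u₁, u₂, u₃} : Finset V) := P.1.eq_of_mem_parts hB h1 haB haA
    subst hBA
    simpa using hbB
  have hvv : ∀ a, samePart P.1 a v → a = v := by
    rintro a ⟨B, hB, haB, hbv⟩
    have hBv : B = ({v} : Finset V) := P.1.eq_of_mem_parts hB h2 hbv (mem_singleton_self v)
    subst hBv
    simpa using haB
  have hAne : ({u₁, u₂, u₃} : Finset V) ≠ ({v} : Finset V) := by
    intro h
    have h2' : u₂ ∈ ({v} : Finset V) := h ▸ (by simp : u₂ ∈ ({u₁, u₂, u₃} : Finset V))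
    have h3' : u₃ ∈ ({v} : Finset V) := h ▸ (by simp : u₃ ∈ ({u₁, u₂, u₃} : Finset V))
    simp only [mem_singleton] at h2' h3'
    exact h23 (h2'.trans h3'.symm)
  have hnv : ∀ a, a ∈ ({u₁, u₂, u₃} : Finset V) → a ≠ v := by
    intro a ha he
    exact hAne (P.1.eq_of_mem_parts h1 h2 (he ▸ ha) (mem_singleton_self v))
  have h1v : u₁ ≠ v := hnv u₁ (by simp)
  have h2v : u₂ ≠ v := hnv u₂ (by simp)
  have h3v : u₃ ≠ v := hnv u₃ (by simp)
  have nr1v : ¬ samePart P.1 u₁ v := fun h => h1v (hvv u₁ h)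
  -- the generic swap lemma
  have gen : ∀ x y z a b : V, x ≠ y → x ≠ z → y ≠ z →
      (∀ c d, samePart P.1 c d → (c = x ∨ c = y ∨ c = z) → (d = x ∨ d = y ∨ d = z)) →
      samePart P.1 a b → a ≠ z → b ≠ z → ((a = x ↔ b = x) ↔ (a = y ↔ b = y)) := by
    intro x y z a b hxy hxz hyz hcl hr ha hb
    by_cases hax : a = x
    · rcases hcl a b hr (Or.inl hax) with hbx | hby | hbz
      · simp [hax, hbx]
      · simp [hax, hby, hxy, Ne.symm hxy]
      · exact absurd hbz hb
    by_cases hay : a = y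
    · rcases hcl a b hr (Or.inr (Or.inl hay)) with hbx | hby | hbz
      · simp [hay, hbx, hxy, Ne.symm hxy]
      · simp [hay, hby]
      · exact absurd hbz hb
    by_cases haz : a = z
    · exact absurd haz ha
    have hbn : ¬ (b = x ∨ b = y ∨ b = z) := by
      intro h
      rcases hcl b a (samePart_symm hr) h with h' | h' | h'
      exacts [hax h', hay h', haz h']
    push_neg at hbn
    simp [hax, hay, hbn.1, hbn.2.1]
  have gen12 : ∀ a b, samePart P.1 a b → a ≠ u₃ → b ≠ u₃ →
      ((a = u₁ ↔ b = u₁) ↔ (a = u₂ ↔ b = u₂)) :=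
    fun a b => gen u₁ u₂ u₃ a b h12 h13 h23 hclos3
  have gen13 : ∀ a b, samePart P.1 a b → a ≠ u₂ → b ≠ u₂ →
      ((a = u₁ ↔ b = u₁) ↔ (a = u₃ ↔ b = u₃)) :=
    fun a b => gen u₁ u₃ u₂ a b h13 h12 (Ne.symm h23)
      (fun c d h hc => by rcases hclos3 c d h (by tauto) with h' | h' | h' <;> tauto)
  have gen23 : ∀ a b, samePart P.1 a b → a ≠ u₁ → b ≠ u₁ →
      ((a = u₂ ↔ b = u₂) ↔ (a = u₃ ↔ b = u₃)) :=
    fun a b => gen u₂ u₃ u₁ a b h23 (Ne.symm h12) (Ne.symm h13)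
      (fun c d h hc => by rcases hclos3 c d h (by tauto) with h' | h' | h' <;> tauto)
  -- the partitions
  set QP₁ := splitP P.1 {u₁} with hQP₁
  set QP₂ := splitP P.1 {u₂} with hQP₂
  set QP₃ := splitP P.1 {u₃} with hQP₃
  set RP := splitP P.1 {u₁, u₂, u₃} with hRP
  set Q'P := pullP P.1 (fun a => if a = u₁ then v else a) with hQ'P
  have sQ₁ : ∀ a b, samePart QP₁ a b ↔ samePart P.1 a b ∧ (a = u₁ ↔ b = u₁) := by
    intro a b; rw [hQP₁, samePart_splitP]; simp
  have sQ₂ : ∀ a b, samePart QP₂ a b ↔ samePart P.1 a b ∧ (a = u₂ ↔ b = u₂) := by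
    intro a b; rw [hQP₂, samePart_splitP]; simp
  have sQ₃ : ∀ a b, samePart QP₃ a b ↔ samePart P.1 a b ∧ (a = u₃ ↔ b = u₃) := by
    intro a b; rw [hQP₃, samePart_splitP]; simp
  have sR : ∀ a b, samePart RP a b ↔ samePart P.1 a b ∧
      (a = u₁ ↔ b = u₁) ∧ (a = u₂ ↔ b = u₂) ∧ (a = u₃ ↔ b = u₃) := by
    intro a b; rw [hRP, samePart_splitP]; simp [and_assoc]
  have sQ' : ∀ a b, samePart Q'P a b ↔
      samePart P.1 (if a = u₁ then v else a) (if b = u₁ then v else b) := by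
    intro a b; rw [hQ'P, samePart_pullP]
  -- independence
  have isp₁ : IsISP G QP₁ := isISP_of_rel fun a b h => rel_of_isISP P.2 ((sQ₁ a b).1 h).1
  have isp₂ : IsISP G QP₂ := isISP_of_rel fun a b h => rel_of_isISP P.2 ((sQ₂ a b).1 h).1
  have isp₃ : IsISP G QP₃ := isISP_of_rel fun a b h => rel_of_isISP P.2 ((sQ₃ a b).1 h).1
  have ispR : IsISP G RP := isISP_of_rel fun a b h => rel_of_isISP P.2 ((sR a b).1 h).1
  have ispQ' : IsISP G Q'P := by
    refine isISP_of_rel fun a b h => ?_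
    rw [sQ' a b] at h
    by_cases ha1 : a = u₁ <;> by_cases hb1 : b = u₁
    · rw [ha1, hb1]; exact G.loopless.irrefl u₁
    · rw [if_pos ha1, if_neg hb1] at h
      have : b = v := hvv b (samePart_symm h)
      rw [ha1, this]; exact e1
    · rw [if_neg ha1, if_pos hb1] at h
      have hav : a = v := hvv a h
      rw [hav, hb1]
      exact fun had => e1 had.symm
    · rw [if_neg ha1, if_neg hb1] at h
      exact rel_of_isISP P.2 h

  -- frequently used samePart values
  have sp123 : samePart QP₁ u₂ u₃ :=
    (sQ₁ u₂ u₃).2 ⟨r23, iff_of_false (Ne.symm h12) (Ne.symm h13)⟩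
  have sp213 : samePart QP₂ u₁ u₃ :=
    (sQ₂ u₁ u₃).2 ⟨r13, iff_of_false h12 (Ne.symm h23)⟩
  have sp312 : samePart QP₃ u₁ u₂ :=
    (sQ₃ u₁ u₂).2 ⟨r12, iff_of_false h13 h23⟩
  have hQ'uv : samePart Q'P u₁ v := by
    rw [sQ' u₁ v, if_pos rfl, if_neg (Ne.symm h1v)]
    exact samePart_refl _ _
  have hQ'23 : samePart Q'P u₂ u₃ := by
    rw [sQ' u₂ u₃, if_neg (Ne.symm h12), if_neg (Ne.symm h13)]
    exact r23
  -- adjacency: P to Q₁, Q₂, Q₃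
  have adjPQ₁ : MovedBy P.1 QP₁ u₁ := by
    refine ⟨ne_of_samePart r12 ?_, fun a b ha hb => ?_⟩
    · rw [sQ₁]; rintro ⟨-, h⟩; exact h12 (h.mp rfl).symm
    · rw [sQ₁]
      exact ⟨fun h => ⟨h, iff_of_false ha hb⟩, And.left⟩
  have adjPQ₂ : MovedBy P.1 QP₂ u₂ := by
    refine ⟨ne_of_samePart r12 ?_, fun a b ha hb => ?_⟩
    · rw [sQ₂]; rintro ⟨-, h⟩; exact h12 (h.mpr rfl)
    · rw [sQ₂]
      exact ⟨fun h => ⟨h, iff_of_false ha hb⟩, And.left⟩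
  have adjPQ₃ : MovedBy P.1 QP₃ u₃ := by
    refine ⟨ne_of_samePart r13 ?_, fun a b ha hb => ?_⟩
    · rw [sQ₃]; rintro ⟨-, h⟩; exact h13 (h.mpr rfl)
    · rw [sQ₃]
      exact ⟨fun h => ⟨h, iff_of_false ha hb⟩, And.left⟩
  -- adjacency: the triangle
  have adjQ₁Q₂ : MovedBy QP₁ QP₂ u₃ := by
    refine ⟨ne_of_samePart sp123 ?_, fun a b ha hb => ?_⟩
    · rw [sQ₂]; rintro ⟨-, h⟩; exact h23 (h.mp rfl).symm
    · rw [sQ₁, sQ₂]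
      constructor
      · rintro ⟨hr, hi⟩; exact ⟨hr, (gen12 a b hr ha hb).mp hi⟩
      · rintro ⟨hr, hi⟩; exact ⟨hr, (gen12 a b hr ha hb).mpr hi⟩
  have adjQ₁Q₃ : MovedBy QP₁ QP₃ u₂ := by
    refine ⟨ne_of_samePart sp123 ?_, fun a b ha hb => ?_⟩
    · rw [sQ₃]; rintro ⟨-, h⟩; exact h23 (h.mpr rfl)
    · rw [sQ₁, sQ₃]
      constructor
      · rintro ⟨hr, hi⟩; exact ⟨hr, (gen13 a b hr ha hb).mp hi⟩
      · rintro ⟨hr, hi⟩; exact ⟨hr, (gen13 a b hr ha hb).mpr hi⟩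
  have adjQ₂Q₃ : MovedBy QP₂ QP₃ u₁ := by
    refine ⟨ne_of_samePart sp213 ?_, fun a b ha hb => ?_⟩
    · rw [sQ₃]; rintro ⟨-, h⟩; exact h13 (h.mpr rfl)
    · rw [sQ₂, sQ₃]
      constructor
      · rintro ⟨hr, hi⟩; exact ⟨hr, (gen23 a b hr ha hb).mp hi⟩
      · rintro ⟨hr, hi⟩; exact ⟨hr, (gen23 a b hr ha hb).mpr hi⟩
  -- adjacency: Q_i to R
  have adjQ₁R : MovedBy QP₁ RP u₂ := by
    refine ⟨ne_of_samePart sp123 ?_, fun a b ha hb => ?_⟩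
    · rw [sR]; rintro ⟨-, -, h, -⟩; exact h23 (h.mp rfl).symm
    · rw [sQ₁, sR]
      constructor
      · rintro ⟨hr, hi⟩
        exact ⟨hr, hi, iff_of_false ha hb, (gen13 a b hr ha hb).mp hi⟩
      · rintro ⟨hr, hi, -, -⟩; exact ⟨hr, hi⟩
  have adjQ₂R : MovedBy QP₂ RP u₁ := by
    refine ⟨ne_of_samePart sp213 ?_, fun a b ha hb => ?_⟩
    · rw [sR]; rintro ⟨-, h, -, -⟩; exact h13 (h.mp rfl).symm
    · rw [sQ₂, sR]
      constructor
      · rintro ⟨hr, hi⟩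
        exact ⟨hr, iff_of_false ha hb, hi, (gen23 a b hr ha hb).mp hi⟩
      · rintro ⟨hr, -, hi, -⟩; exact ⟨hr, hi⟩
  have adjQ₃R : MovedBy QP₃ RP u₁ := by
    refine ⟨ne_of_samePart sp312 ?_, fun a b ha hb => ?_⟩
    · rw [sR]; rintro ⟨-, h, -, -⟩; exact h12 (h.mp rfl).symm
    · rw [sQ₃, sR]
      constructor
      · rintro ⟨hr, hi⟩
        exact ⟨hr, iff_of_false ha hb, (gen23 a b hr ha hb).mpr hi, hi⟩
      · rintro ⟨hr, -, -, hi⟩; exact ⟨hr, hi⟩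
  -- R is not P, not adjacent to P
  have nRP : RP ≠ P.1 := by
    refine (ne_of_samePart r12 ?_).symm
    rw [sR]; rintro ⟨-, h, -, -⟩; exact h12 (h.mp rfl).symm
  have nadjPR : ¬ ∃ x, MovedBy P.1 RP x := by
    rintro ⟨x, -, hiff⟩
    by_cases hx1 : x = u₁
    · have h := (hiff u₂ u₃ (by rw [hx1]; exact Ne.symm h12) (by rw [hx1]; exact Ne.symm h13)).mp r23
      rw [sR] at h
      exact h23 (h.2.2.1.mp rfl).symm
    by_cases hx2 : x = u₂
    · have h := (hiff u₁ u₃ (fun e => h12 (e.trans hx2)) ?_).mp r13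
      · rw [sR] at h
        exact h13 (h.2.1.mp rfl).symm
      · rw [hx2]; exact Ne.symm h23
    · have h := (hiff u₁ u₂ (fun e => hx1 e.symm) (fun e => hx2 e.symm)).mp r12
      rw [sR] at h
      exact h12 (h.2.1.mp rfl).symm
  -- adjacency: P to Q'
  have adjPQ' : MovedBy P.1 Q'P u₁ := by
    refine ⟨(ne_of_samePart hQ'uv nr1v).symm, fun a b ha hb => ?_⟩
    rw [sQ' a b, if_neg ha, if_neg hb]
  -- Q' adjacent to Q₁
  have adjQ'Q₁ : MovedBy Q'P QP₁ v := by
    refine ⟨ne_of_samePart hQ'uv ?_, fun a b ha hb => ?_⟩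
    · rw [sQ₁]; rintro ⟨h, -⟩; exact nr1v h
    · rw [sQ' a b, sQ₁ a b]
      by_cases ha1 : a = u₁ <;> by_cases hb1 : b = u₁
      · rw [if_pos ha1, if_pos hb1]
        constructor
        · intro _; exact ⟨by rw [ha1, hb1]; exact samePart_refl _ _, by rw [ha1, hb1]⟩
        · intro _; exact samePart_refl _ _
      · rw [if_pos ha1, if_neg hb1]
        constructor
        · intro h; exact absurd (hvv b (samePart_symm h)) hb
        · rintro ⟨-, hi⟩; exact absurd (hi.mp ha1) hb1
      · rw [if_neg ha1, if_pos hb1]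
        constructor
        · intro h; exact absurd (hvv a h) ha
        · rintro ⟨-, hi⟩; exact absurd (hi.mpr hb1) ha1
      · rw [if_neg ha1, if_neg hb1]
        exact ⟨fun h => ⟨h, iff_of_false ha1 hb1⟩, And.left⟩
  -- Q' not adjacent to Q₂ nor Q₃
  have nadjQ'Q₂ : ¬ ∃ x, MovedBy Q'P QP₂ x := by
    rintro ⟨x, -, hiff⟩
    rcases em (x = u₂ ∨ x = u₃) with hx | hx
    · have h := (hiff u₁ v (by rcases hx with rfl | rfl; exacts [h12, h13])
        (by rcases hx with rfl | rfl; exacts [Ne.symm h2v, Ne.symm h3v])).mp hQ'uv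
      rw [sQ₂] at h
      exact nr1v h.1
    · push_neg at hx
      have h := (hiff u₂ u₃ (fun e => hx.1 e.symm) (fun e => hx.2 e.symm)).mp hQ'23
      rw [sQ₂] at h
      exact h23 (h.2.mp rfl).symm
  have nadjQ'Q₃ : ¬ ∃ x, MovedBy Q'P QP₃ x := by
    rintro ⟨x, -, hiff⟩
    rcases em (x = u₂ ∨ x = u₃) with hx | hx
    · have h := (hiff u₁ v (by rcases hx with rfl | rfl; exacts [h12, h13])
        (by rcases hx with rfl | rfl; exacts [Ne.symm h2v, Ne.symm h3v])).mp hQ'uv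
      rw [sQ₃] at h
      exact nr1v h.1
    · push_neg at hx
      have h := (hiff u₂ u₃ (fun e => hx.1 e.symm) (fun e => hx.2 e.symm)).mp hQ'23
      rw [sQ₃] at h
      exact h23 (h.2.mpr rfl)
  -- assemble
  refine ⟨⟨QP₁, isp₁⟩, ⟨QP₂, isp₂⟩, ⟨QP₃, isp₃⟩, ⟨u₁, adjPQ₁⟩, ⟨u₂, adjPQ₂⟩, ⟨u₃, adjPQ₃⟩,
    ⟨u₃, adjQ₁Q₂⟩, ⟨u₂, adjQ₁Q₃⟩, ⟨u₁, adjQ₂Q₃⟩,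
    ⟨⟨RP, ispR⟩, ⟨u₂, adjQ₁R⟩, ⟨u₁, adjQ₂R⟩, ⟨u₁, adjQ₃R⟩, ?_, nadjPR⟩,
    ⟨Q'P, ispQ'⟩, ⟨u₁, adjPQ'⟩, Or.inl ⟨⟨v, adjQ'Q₁⟩, nadjQ'Q₂, nadjQ'Q₃⟩⟩
  intro h
  exact nRP (congrArg Subtype.val h)
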